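/- Let k and l be integers with k, l ≥ 2, and let p be a prime with p > (k·l)^{10}. Then for any integers a, b, n with p ∤ a, p ∤ b and p ∤ n, the congruence n ≡ a·u^k + b·v^l (mod p) possesses a solution in integers u, v with p ∤ uv. -/

import Mathlib

open Finset
variable {p : ℕ} [Fact p.Prime]
noncomputable instance : Fintype (MulChar (ZMod p) ℂ) := DirichletCharacter.fintype

lemma char_abs_one (χ : MulChar (ZMod p) ℂ) {x : ZMod p} (hx : x ≠ 0) :
    ‖χ x‖ = 1 := by
  have h : (χ x) ^ (p - 1) = 1 := by
    rw [← map_pow, ZMod.pow_card_sub_one_eq_one hx, map_one]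
  have h2 : (‖χ x‖) ^ (p - 1) = 1 := by
    rw [← norm_pow, h, norm_one]
  have hp1 : p - 1 ≠ 0 := by
    have := (Fact.out : p.Prime).two_le; omega
  rcases (pow_eq_one_iff_cases.mp h2) with h' | h' | h'
  · exact absurd h' hp1
  · exact h'
  · have := norm_nonneg (χ x); linarith [h'.1]

lemma conj_char (χ : MulChar (ZMod p) ℂ) (x : ZMod p) :
    (starRingEnd ℂ) (χ x) = χ⁻¹ x := by
  rcases eq_or_ne x 0 with rfl | hx
  · simp [MulChar.map_zero]
  · rw [MulChar.inv_apply_eq_inv' χ x, ← Complex.inv_eq_conj (char_abs_one χ hx)]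

lemma conj_jacobiSum (χ ψ : MulChar (ZMod p) ℂ) :
    (starRingEnd ℂ) (jacobiSum χ ψ) = jacobiSum χ⁻¹ ψ⁻¹ := by
  unfold jacobiSum
  rw [map_sum]
  exact Finset.sum_congr rfl fun x _ => by rw [map_mul, conj_char, conj_char]

lemma jacobiSum_abs_eq {χ ψ : MulChar (ZMod p) ℂ} (hχ : χ ≠ 1) (hψ : ψ ≠ 1)
    (hχψ : χ * ψ ≠ 1) : ‖jacobiSum χ ψ‖ = Real.sqrt p := by
  have hch : ringChar ℂ ≠ ringChar (ZMod p) := by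
    rw [ringChar.eq_zero, ZMod.ringChar_zmod_n]
    exact fun h => (Fact.out : p.Prime).ne_zero h.symm
  have h := jacobiSum_mul_jacobiSum_inv hch hχ hψ hχψ
  rw [← conj_jacobiSum, Complex.mul_conj] at h
  have hcard : (Fintype.card (ZMod p) : ℂ) = (p : ℂ) := by
    rw [ZMod.card]
  rw [hcard] at h
  have h2 : Complex.normSq (jacobiSum χ ψ) = (p : ℝ) := by
    exact_mod_cast h
  rw [Complex.norm_def, h2]

lemma orth1 {x : ZMod p} (hx : x ≠ 0) (b : ZMod p) :
    ∑ χ : MulChar (ZMod p) ℂ, χ x⁻¹ * χ b = if x = b then ((p : ℂ) - 1) else 0 := by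
  have h := DirichletCharacter.sum_char_inv_mul_char_eq ℂ (isUnit_iff_ne_zero.mpr hx) b
  rw [h, Nat.totient_prime Fact.out, Nat.cast_sub (Fact.out : p.Prime).one_le, Nat.cast_one]

lemma orth2 (χ : MulChar (ZMod p) ℂ) :
    ∑ u : ZMod p, χ u = if χ = 1 then ((p : ℂ) - 1) else 0 := by
  split_ifs with h
  · subst h
    have h1 : ∀ u : ZMod p, (1 : MulChar (ZMod p) ℂ) u = if u = 0 then 0 else 1 := by
      intro u
      rcases eq_or_ne u 0 with rfl | hu
      · simp [MulChar.map_zero]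
      · simp [hu, MulChar.one_apply (isUnit_iff_ne_zero.mpr hu)]
    rw [Finset.sum_congr rfl fun u _ => h1 u]
    have h2 : ∀ u : ZMod p, (if u = 0 then (0:ℂ) else 1) = 1 - (if u = 0 then 1 else 0) := by
      intro u; split_ifs <;> ring
    rw [Finset.sum_congr rfl fun u _ => h2 u, Finset.sum_sub_distrib,
      Finset.sum_ite_eq' Finset.univ (0 : ZMod p) (fun _ => (1:ℂ))]
    simp [ZMod.card]
  · exact MulChar.sum_eq_zero_of_ne_one h

lemma expand {x : ZMod p} (hx : x ≠ 0) (f : ZMod p → ℂ) :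
    ((p : ℂ) - 1) * f x = ∑ χ : MulChar (ZMod p) ℂ, χ x⁻¹ * ∑ y, χ y * f y := by
  have h1 : ∀ χ : MulChar (ZMod p) ℂ, χ x⁻¹ * ∑ y, χ y * f y = ∑ y, (χ x⁻¹ * χ y) * f y := by
    intro χ; rw [Finset.mul_sum]; exact Finset.sum_congr rfl fun y _ => by ring
  rw [Finset.sum_congr rfl fun χ _ => h1 χ, Finset.sum_comm]
  rw [Finset.sum_congr rfl fun y _ => by rw [← Finset.sum_mul, orth1 hx y]]
  simp only [ite_mul, zero_mul]
  rw [Finset.sum_ite_eq Finset.univ x (fun y => ((p:ℂ)-1) * f y)]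
  simp

lemma charPow_sum (m : ℕ) (hm : m ≠ 0) (χ : MulChar (ZMod p) ℂ) :
    ∑ u : ZMod p, χ u⁻¹ ^ m = if χ ^ m = 1 then ((p : ℂ) - 1) else 0 := by
  have h1 : ∀ u : ZMod p, χ u⁻¹ ^ m = ((χ⁻¹) ^ m) u := by
    intro u
    rw [MulChar.pow_apply' _ hm, MulChar.inv_apply' χ u]
  rw [Finset.sum_congr rfl fun u _ => h1 u, orth2]
  congr 1
  rw [inv_pow, inv_eq_one]

open scoped Classical in
lemma step_v (l : ℕ) (hl : l ≠ 0) {c : ZMod p} (hc : c ≠ 0) (χ : MulChar (ZMod p) ℂ) :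
    ((p : ℂ) - 1) * ∑ v ∈ Finset.univ.erase (0 : ZMod p), χ (1 - c * v ^ l)
      = ∑ ψ : MulChar (ZMod p) ℂ,
          if ψ ^ l = 1 then ((p : ℂ) - 1) * (ψ c⁻¹ * jacobiSum ψ χ) else 0 := by
  rw [Finset.mul_sum]
  have h1 : ∀ v ∈ Finset.univ.erase (0 : ZMod p),
      ((p : ℂ) - 1) * χ (1 - c * v ^ l)
        = ∑ ψ : MulChar (ZMod p) ℂ, ψ (c * v ^ l)⁻¹ * jacobiSum ψ χ := by
    intro v hv
    have hv0 : v ≠ 0 := Finset.mem_erase.mp hv |>.1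
    have hx : c * v ^ l ≠ 0 := mul_ne_zero hc (pow_ne_zero _ hv0)
    have := expand hx (fun y => χ (1 - y))
    simpa [jacobiSum] using this
  rw [Finset.sum_congr rfl h1, Finset.sum_comm]
  refine Finset.sum_congr rfl fun ψ _ => ?_
  have h2 : ∀ v ∈ Finset.univ.erase (0 : ZMod p),
      ψ (c * v ^ l)⁻¹ * jacobiSum ψ χ = (ψ c⁻¹ * jacobiSum ψ χ) * ψ v⁻¹ ^ l := by
    intro v _
    rw [mul_inv, ← inv_pow, map_mul, map_pow]
    ring
  rw [Finset.sum_congr rfl h2, ← Finset.mul_sum]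
  have h3 : ∑ v ∈ Finset.univ.erase (0 : ZMod p), ψ v⁻¹ ^ l
      = if ψ ^ l = 1 then ((p : ℂ) - 1) else 0 := by
    rw [Finset.sum_erase _ (by simp [MulChar.map_zero, zero_pow hl]), charPow_sum l hl ψ]
  rw [h3]
  split_ifs <;> ring

open scoped Classical in
lemma main_identity (k l : ℕ) (hk : k ≠ 0) (hl : l ≠ 0)
    {A B N : ZMod p} (hA : A ≠ 0) (hB : B ≠ 0) (hN : N ≠ 0) :
    ((p : ℂ) - 1) ^ 2 * (∑ u ∈ Finset.univ.erase (0 : ZMod p),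
        ∑ v ∈ Finset.univ.erase (0 : ZMod p),
          (if A * u ^ k + B * v ^ l = N then (1 : ℂ) else 0))
      = ((p : ℂ) - 1) ^ 2 * ∑ χ : MulChar (ZMod p) ℂ, ∑ ψ : MulChar (ZMod p) ℂ,
          (if χ ^ k = 1 ∧ ψ ^ l = 1 then
            χ A⁻¹ * χ N * ψ (N * B⁻¹) * jacobiSum ψ χ else 0) := by
  -- the inner sum over v
  set W : MulChar (ZMod p) ℂ → ℂ :=
    fun χ => ∑ v ∈ Finset.univ.erase (0 : ZMod p), χ (N - B * v ^ l) with hW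
  have hWexp : ∀ χ : MulChar (ZMod p) ℂ, ((p : ℂ) - 1) * W χ
      = χ N * ∑ ψ : MulChar (ZMod p) ℂ,
          (if ψ ^ l = 1 then ((p : ℂ) - 1) * (ψ (N * B⁻¹) * jacobiSum ψ χ) else 0) := by
    intro χ
    have hc : (N⁻¹ * B : ZMod p) ≠ 0 := mul_ne_zero (inv_ne_zero hN) hB
    have key : W χ = χ N * ∑ v ∈ Finset.univ.erase (0 : ZMod p),
        χ (1 - (N⁻¹ * B) * v ^ l) := by
      rw [hW, Finset.mul_sum]
      refine Finset.sum_congr rfl fun v _ => ?_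
      rw [← map_mul]
      congr 1
      field_simp
    rw [key, mul_left_comm, step_v l hl hc χ]
    congr 1
    refine Finset.sum_congr rfl fun ψ _ => ?_
    rw [mul_inv, inv_inv]
  -- step A : expand indicator
  have stepA : ∀ u ∈ Finset.univ.erase (0 : ZMod p), ∀ v ∈ Finset.univ.erase (0 : ZMod p),
      ((p : ℂ) - 1) * (if A * u ^ k + B * v ^ l = N then (1 : ℂ) else 0)
        = ∑ χ : MulChar (ZMod p) ℂ, χ (A * u ^ k)⁻¹ * χ (N - B * v ^ l) := by
    intro u hu v hv
    have hu0 : u ≠ 0 := (Finset.mem_erase.mp hu).1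
    have hx : A * u ^ k ≠ 0 := mul_ne_zero hA (pow_ne_zero _ hu0)
    rw [orth1 hx (N - B * v ^ l)]
    have hiff : (A * u ^ k = N - B * v ^ l) ↔ (A * u ^ k + B * v ^ l = N) := by
      constructor <;> intro h <;> [rw [h]; rw [← h]] <;> ring
    simp only [hiff]
    split_ifs <;> ring
  -- inner (v,χ) swap for fixed u
  have h1 : ∀ u ∈ Finset.univ.erase (0 : ZMod p),
      ∑ v ∈ Finset.univ.erase (0 : ZMod p),
          ((p : ℂ) - 1) * (if A * u ^ k + B * v ^ l = N then (1 : ℂ) else 0)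
        = ∑ χ : MulChar (ZMod p) ℂ, χ (A * u ^ k)⁻¹ * W χ := by
    intro u hu
    rw [Finset.sum_congr rfl (fun v hv => stepA u hu v hv), Finset.sum_comm]
    exact Finset.sum_congr rfl fun χ _ => (Finset.mul_sum _ _ _).symm
  -- sum over u of χ ((A u^k)⁻¹)
  have h2 : ∀ χ : MulChar (ZMod p) ℂ,
      ∑ u ∈ Finset.univ.erase (0 : ZMod p), χ (A * u ^ k)⁻¹
        = χ A⁻¹ * (if χ ^ k = 1 then ((p : ℂ) - 1) else 0) := by
    intro χ
    have hterm : ∀ u : ZMod p, χ (A * u ^ k)⁻¹ = χ A⁻¹ * χ u⁻¹ ^ k := by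
      intro u
      rw [mul_inv, ← inv_pow, map_mul, map_pow]
    rw [Finset.sum_congr rfl fun u _ => hterm u, ← Finset.mul_sum]
    congr 1
    rw [Finset.sum_erase _ (by simp [MulChar.map_zero, zero_pow hk]), charPow_sum k hk χ]
  -- EQ1
  have EQ1 : ((p : ℂ) - 1) * (∑ u ∈ Finset.univ.erase (0 : ZMod p),
        ∑ v ∈ Finset.univ.erase (0 : ZMod p),
          (if A * u ^ k + B * v ^ l = N then (1 : ℂ) else 0))
      = ∑ χ : MulChar (ZMod p) ℂ,
          (if χ ^ k = 1 then ((p : ℂ) - 1) * (χ A⁻¹ * W χ) else 0) := by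
    calc ((p : ℂ) - 1) * (∑ u ∈ Finset.univ.erase (0 : ZMod p),
        ∑ v ∈ Finset.univ.erase (0 : ZMod p),
          (if A * u ^ k + B * v ^ l = N then (1 : ℂ) else 0))
        = ∑ u ∈ Finset.univ.erase (0 : ZMod p),
            ∑ v ∈ Finset.univ.erase (0 : ZMod p),
              ((p : ℂ) - 1) * (if A * u ^ k + B * v ^ l = N then (1 : ℂ) else 0) := by
          simp only [Finset.mul_sum]
      _ = ∑ u ∈ Finset.univ.erase (0 : ZMod p),
            ∑ χ : MulChar (ZMod p) ℂ, χ (A * u ^ k)⁻¹ * W χ := Finset.sum_congr rfl h1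
      _ = ∑ χ : MulChar (ZMod p) ℂ,
            ∑ u ∈ Finset.univ.erase (0 : ZMod p), χ (A * u ^ k)⁻¹ * W χ := Finset.sum_comm
      _ = ∑ χ : MulChar (ZMod p) ℂ,
            (if χ ^ k = 1 then ((p : ℂ) - 1) * (χ A⁻¹ * W χ) else 0) := by
          refine Finset.sum_congr rfl fun χ _ => ?_
          rw [← Finset.sum_mul, h2 χ]
          split_ifs <;> ring
  -- final assembly
  rw [sq, mul_assoc, EQ1]
  simp only [Finset.mul_sum, mul_ite, mul_zero]
  refine Finset.sum_congr rfl fun χ _ => ?_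
  split_ifs with hχ
  · have lhs : ((p : ℂ) - 1) * (((p : ℂ) - 1) * (χ A⁻¹ * W χ))
        = ((p : ℂ) - 1) * χ A⁻¹ * (((p : ℂ) - 1) * W χ) := by ring
    rw [lhs, hWexp χ, Finset.mul_sum, Finset.mul_sum]
    refine Finset.sum_congr rfl fun ψ _ => ?_
    simp only [hχ, true_and, mul_ite, mul_zero]
    split_ifs <;> ring
  · simp [hχ]

open scoped Classical in
lemma card_pow_char_le (m : ℕ) (hm : m ≠ 0) :
    (Finset.univ.filter fun χ : MulChar (ZMod p) ℂ => χ ^ m = 1).card ≤ m := by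
  obtain ⟨e⟩ := MulChar.mulEquiv_units (ZMod p) ℂ
  have hcard : (Finset.univ.filter fun χ : MulChar (ZMod p) ℂ => χ ^ m = 1).card
      = (Finset.univ.filter fun x : (ZMod p)ˣ => x ^ m = 1).card := by
    apply Finset.card_bij (fun χ _ => e χ)
    · intro χ hχ
      simp only [Finset.mem_filter, Finset.mem_univ, true_and] at hχ ⊢
      rw [← map_pow, hχ, map_one]
    · intro χ₁ _ χ₂ _ h
      exact e.injective h
    · intro x hx
      simp only [Finset.mem_filter, Finset.mem_univ, true_and] at hx
      refine ⟨e.symm x, Finset.mem_filter.mpr ⟨Finset.mem_univ _, ?_⟩, by simp⟩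
      have h1 : e ((e.symm x) ^ m) = e 1 := by rw [map_pow]; simp [hx]
      exact e.injective h1
  rw [hcard]
  convert IsCyclic.card_pow_eq_one_le (α := (ZMod p)ˣ) (Nat.pos_of_ne_zero hm) using 2

lemma sqrt_ge_one : (1 : ℝ) ≤ Real.sqrt p := by
  have h := Real.sqrt_le_sqrt (show (1:ℝ) ≤ p by exact_mod_cast (Fact.out : p.Prime).one_le)
  rwa [Real.sqrt_one] at h

lemma absJ_le {χ ψ : MulChar (ZMod p) ℂ} (h : ¬(χ = 1 ∧ ψ = 1)) :
    ‖jacobiSum ψ χ‖ ≤ Real.sqrt p := by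
  rcases eq_or_ne ψ 1 with rfl | hψ
  · rcases eq_or_ne χ 1 with rfl | hχ
    · exact absurd ⟨rfl, rfl⟩ h
    · rw [jacobiSum_one_nontrivial hχ]
      simpa using sqrt_ge_one (p := p)
  · rcases eq_or_ne χ 1 with rfl | hχ
    · rw [jacobiSum_comm, jacobiSum_one_nontrivial hψ]
      simpa using sqrt_ge_one (p := p)
    · rcases eq_or_ne (ψ * χ) 1 with hψχ | hψχ
      · have hχ' : χ = ψ⁻¹ := eq_inv_of_mul_eq_one_right hψχ
        rw [hχ', jacobiSum_nontrivial_inv hψ, norm_neg]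
        rw [char_abs_one ψ (neg_ne_zero.mpr one_ne_zero)]
        exact sqrt_ge_one (p := p)
      · exact le_of_eq (jacobiSum_abs_eq hψ hχ hψχ)

open scoped Classical in
theorem main_zmod (k l : ℕ) (hk : 2 ≤ k) (hl : 2 ≤ l) (hbig : (k * l) ^ 10 < p)
    {A B N : ZMod p} (hA : A ≠ 0) (hB : B ≠ 0) (hN : N ≠ 0) :
    ∃ u v : ZMod p, u ≠ 0 ∧ v ≠ 0 ∧ A * u ^ k + B * v ^ l = N := by
  by_contra hcon
  push_neg at hcon
  have hk0 : k ≠ 0 := by omega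
  have hl0 : l ≠ 0 := by omega
  have hp2 : 2 ≤ p := (Fact.out : p.Prime).two_le
  -- the solution count is zero
  have hT : (∑ u ∈ Finset.univ.erase (0 : ZMod p), ∑ v ∈ Finset.univ.erase (0 : ZMod p),
      (if A * u ^ k + B * v ^ l = N then (1 : ℂ) else 0)) = 0 := by
    refine Finset.sum_eq_zero fun u hu => Finset.sum_eq_zero fun v hv => ?_
    exact if_neg (hcon u v (Finset.mem_erase.mp hu).1 (Finset.mem_erase.mp hv).1)
  have hid := main_identity k l hk0 hl0 hA hB hN
  rw [hT, mul_zero] at hid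
  have hp1 : ((p : ℂ) - 1) ^ 2 ≠ 0 := by
    apply pow_ne_zero
    intro h
    have : (p : ℂ) = 1 := by linear_combination h
    have : p = 1 := by exact_mod_cast this
    omega
  have hS : (∑ χ : MulChar (ZMod p) ℂ, ∑ ψ : MulChar (ZMod p) ℂ,
      (if χ ^ k = 1 ∧ ψ ^ l = 1 then
        χ A⁻¹ * χ N * ψ (N * B⁻¹) * jacobiSum ψ χ else 0)) = 0 :=
    (mul_eq_zero.mp hid.symm).resolve_left hp1
  -- rewrite as a sum over pairs
  set f : MulChar (ZMod p) ℂ × MulChar (ZMod p) ℂ → ℂ := fun x =>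
    if x.1 ^ k = 1 ∧ x.2 ^ l = 1 then
      x.1 A⁻¹ * x.1 N * x.2 (N * B⁻¹) * jacobiSum x.2 x.1 else 0 with hf
  have hprod : ∑ x ∈ Finset.univ ×ˢ Finset.univ, f x = 0 := by
    rw [Finset.sum_product]; exact hS
  have hmem : ((1, 1) : MulChar (ZMod p) ℂ × MulChar (ZMod p) ℂ)
      ∈ Finset.univ ×ˢ (Finset.univ : Finset (MulChar (ZMod p) ℂ)) := by simp
  have hsplit := Finset.add_sum_erase _ f hmem
  have hf11 : f (1, 1) = (p : ℂ) - 2 := by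
    have hcond : (1 : MulChar (ZMod p) ℂ) ^ k = 1 ∧ (1 : MulChar (ZMod p) ℂ) ^ l = 1 :=
      ⟨one_pow k, one_pow l⟩
    simp only [hf]
    rw [if_pos hcond]
    rw [MulChar.one_apply (isUnit_iff_ne_zero.mpr (inv_ne_zero hA)),
      MulChar.one_apply (isUnit_iff_ne_zero.mpr hN),
      MulChar.one_apply (isUnit_iff_ne_zero.mpr (mul_ne_zero hN (inv_ne_zero hB))),
      jacobiSum_one_one, ZMod.card]
    ring
  have key : (p : ℂ) - 2
      = -∑ x ∈ (Finset.univ ×ˢ Finset.univ).erase (1, 1), f x := by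
    rw [hprod] at hsplit
    rw [← hf11]
    linear_combination hsplit
  -- absolute values
  have habs : (p : ℝ) - 2
      ≤ ∑ x ∈ (Finset.univ ×ˢ Finset.univ).erase (1, 1), ‖f x‖ := by
    have h1 : ‖(p : ℂ) - 2‖
        ≤ ∑ x ∈ (Finset.univ ×ˢ Finset.univ).erase (1, 1), ‖f x‖ := by
      rw [key, norm_neg]
      exact norm_sum_le _ _
    have h2 : ‖(p : ℂ) - 2‖ = (p : ℝ) - 2 := by
      have hcast : ((p : ℂ) - 2) = ((((p : ℝ) - 2) : ℝ) : ℂ) := by push_cast; ring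
      rw [hcast, Complex.norm_real, Real.norm_eq_abs, abs_of_nonneg]
      have : (2 : ℝ) ≤ (p : ℝ) := by exact_mod_cast hp2
      linarith
    linarith [h1, h2.symm.le]
  -- bound each term
  have hfb : ∀ x ∈ (Finset.univ ×ˢ Finset.univ).erase
      ((1, 1) : MulChar (ZMod p) ℂ × MulChar (ZMod p) ℂ),
      ‖f x‖ ≤ (if x.1 ^ k = 1 ∧ x.2 ^ l = 1 then Real.sqrt p else 0) := by
    intro x hx
    by_cases hc : x.1 ^ k = 1 ∧ x.2 ^ l = 1
    · rw [if_pos hc, hf]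
      simp only [if_pos hc]
      rw [norm_mul, norm_mul, norm_mul]
      rw [char_abs_one _ (inv_ne_zero hA), char_abs_one _ hN,
        char_abs_one _ (mul_ne_zero hN (inv_ne_zero hB))]
      have hne : ¬(x.1 = 1 ∧ x.2 = 1) := by
        rintro ⟨h1, h2⟩
        exact (Finset.mem_erase.mp hx).1 (Prod.ext h1 h2)
      simpa using absJ_le hne
    · rw [if_neg hc, hf]
      simp [hc]
  have hsum : ∑ x ∈ (Finset.univ ×ˢ Finset.univ).erase (1, 1), ‖f x‖
      ≤ ((k * l : ℝ) - 1) * Real.sqrt p := by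
    refine le_trans (Finset.sum_le_sum hfb) ?_
    rw [← Finset.sum_filter]
    rw [Finset.filter_erase]
    set K := Finset.univ.filter fun χ : MulChar (ZMod p) ℂ => χ ^ k = 1 with hK
    set L := Finset.univ.filter fun ψ : MulChar (ZMod p) ℂ => ψ ^ l = 1 with hL
    have hKL : (Finset.univ ×ˢ Finset.univ).filter
        (fun a : MulChar (ZMod p) ℂ × MulChar (ZMod p) ℂ => a.1 ^ k = 1 ∧ a.2 ^ l = 1)
        = K ×ˢ L := by
      ext a
      simp [hK, hL, Finset.mem_product, Finset.mem_filter]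
    rw [hKL]
    have hmemKL : ((1, 1) : MulChar (ZMod p) ℂ × MulChar (ZMod p) ℂ) ∈ K ×ˢ L := by
      simp [hK, hL, Finset.mem_product, one_pow]
    rw [Finset.sum_const, Finset.card_erase_of_mem hmemKL, nsmul_eq_mul]
    have hcard : (K ×ˢ L).card ≤ k * l := by
      rw [Finset.card_product]
      exact Nat.mul_le_mul (card_pow_char_le k hk0) (card_pow_char_le l hl0)
    have hone : 1 ≤ (K ×ˢ L).card := Finset.card_pos.mpr ⟨_, hmemKL⟩
    have hcast : ((K ×ˢ L).card - 1 : ℕ) ≤ (k * l - 1 : ℕ) := by omega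
    have hcast2 : (((K ×ˢ L).card - 1 : ℕ) : ℝ) ≤ ((k * l : ℝ) - 1) := by
      have : ((k * l - 1 : ℕ) : ℝ) = (k * l : ℝ) - 1 := by
        have h4 : 4 ≤ k * l := Nat.mul_le_mul hk hl
        have : 1 ≤ k * l := by omega
        push_cast [Nat.cast_sub this]
        ring
      rw [← this]
      exact_mod_cast hcast
    exact mul_le_mul_of_nonneg_right hcast2 (Real.sqrt_nonneg _)
  -- final numeric contradiction
  set s := Real.sqrt p with hs
  set m := (k * l : ℝ) with hm
  have hm4 : (4 : ℝ) ≤ m := by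
    rw [hm]
    have : 4 ≤ k * l := Nat.mul_le_mul hk hl
    exact_mod_cast this
  have hm5 : m ^ 5 < s := by
    rw [hs]
    have h1 : (m ^ 5) ^ 2 < (p : ℝ) := by
      rw [hm]
      have : ((k * l : ℕ) : ℝ) ^ 10 < (p : ℝ) := by exact_mod_cast hbig
      push_cast at this ⊢
      nlinarith [this]
    have h2 : (0 : ℝ) ≤ m ^ 5 := by positivity
    nlinarith [Real.sq_sqrt (le_of_lt (lt_of_le_of_lt (by positivity) h1) : (0:ℝ) ≤ (p:ℝ)),
      Real.sqrt_nonneg (p : ℝ), h1, h2]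
  have hss : s * s = (p : ℝ) := Real.mul_self_sqrt (by positivity)
  have hfinal : (p : ℝ) - 2 ≤ (m - 1) * s := le_trans habs hsum
  have hm_le : m ≤ m ^ 5 := by
    have h1 : (1 : ℝ) ≤ m := by linarith
    have h2 := pow_le_pow_right₀ h1 (show 1 ≤ 5 by norm_num)
    rwa [pow_one] at h2
  have hspos : (0 : ℝ) < s := lt_of_lt_of_le (by linarith) (le_of_lt hm5)
  have hb : m * s ≤ m ^ 5 * s := mul_le_mul_of_nonneg_right hm_le (le_of_lt hspos)
  have hc : m ^ 5 * s < s * s := mul_lt_mul_of_pos_right hm5 hspos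
  have hexp : (m - 1) * s = m * s - s := by ring
  have hsge : (4 : ℝ) ≤ s := le_trans (le_trans hm4 hm_le) (le_of_lt hm5)
  linarith

/-- Solubility of the diagonal congruence `n ≡ a·u^k + b·v^l (mod p)` with `p ∤ uv`, for a
prime `p > (kl)^10`; a consequence of Weil's bounds. -/
theorem weil_diagonal_congruence (k l : ℕ) (hk : 2 ≤ k) (hl : 2 ≤ l)
    (p : ℕ) (hp : p.Prime) (hbig : (k * l) ^ 10 < p)
    (a b n : ℤ) (ha : ¬ (p : ℤ) ∣ a) (hb : ¬ (p : ℤ) ∣ b) (hn : ¬ (p : ℤ) ∣ n) :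
    ∃ u v : ℤ, ¬ (p : ℤ) ∣ u * v ∧ a * u ^ k + b * v ^ l ≡ n [ZMOD (p : ℤ)] := by
  haveI : Fact p.Prime := ⟨hp⟩
  have hA : ((a : ZMod p)) ≠ 0 := fun h => ha ((ZMod.intCast_zmod_eq_zero_iff_dvd a p).mp h)
  have hB : ((b : ZMod p)) ≠ 0 := fun h => hb ((ZMod.intCast_zmod_eq_zero_iff_dvd b p).mp h)
  have hN : ((n : ZMod p)) ≠ 0 := fun h => hn ((ZMod.intCast_zmod_eq_zero_iff_dvd n p).mp h)
  obtain ⟨u, v, hu, hv, heq⟩ := main_zmod k l hk hl hbig hA hB hN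
  have hu' : (((u.val : ℤ)) : ZMod p) = u := by
    push_cast
    simp [ZMod.natCast_val, ZMod.cast_id]
  have hv' : (((v.val : ℤ)) : ZMod p) = v := by
    push_cast
    simp [ZMod.natCast_val, ZMod.cast_id]
  refine ⟨(u.val : ℤ), (v.val : ℤ), ?_, ?_⟩
  · intro hdvd
    have h0 : (((u.val : ℤ) * (v.val : ℤ) : ℤ) : ZMod p) = 0 :=
      (ZMod.intCast_zmod_eq_zero_iff_dvd _ p).mpr hdvd
    rw [Int.cast_mul, hu', hv'] at h0
    exact mul_ne_zero hu hv h0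
  · have hcast : ((a * (u.val : ℤ) ^ k + b * (v.val : ℤ) ^ l : ℤ) : ZMod p)
        = ((n : ℤ) : ZMod p) := by
      push_cast
      rw [show (((u.val : ℕ)) : ZMod p) = u by simp [ZMod.natCast_val, ZMod.cast_id],
        show (((v.val : ℕ)) : ZMod p) = v by simp [ZMod.natCast_val, ZMod.cast_id]]
      exact heq
    exact (ZMod.intCast_eq_intCast_iff _ _ _).mp hcast
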